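/- Let τ_i ∈ 𝔖_N be the permutation that exchanges the two consecutive blocks {n+(i−1)m+1,…,n+im} and {n+im+1,…,n+(i+1)m} (adding m to each letter of the first block and subtracting m from each letter of the second) and fixes all other letters. Set a = n+(i−1)m+1, b = n+im, and for 0 ≤ l ≤ m−1 let κ_l = s_{b−l}·s_{b−l+2}·⋯·s_{b+l−2}·s_{b+l} (a product of l+1 pairwise commuting simple transpositions, where s_c denotes the transposition (c, c+1)). Then τ_i = κ_0κ_1⋯κ_{m−2}κ_{m−1}κ_{m−2}⋯κ_1κ_0, and concatenating the factors gives a reduced expression of τ_i; in particular the Coxeter length of τ_i is m². -/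

import Mathlib

namespace Stmt8

def row (c j : ℕ) : Equiv.Perm ℕ :=
  ((List.range j).map fun t => Equiv.swap (c + 2 * t) (c + 2 * t + 1)).prod

lemma row_zero (c : ℕ) : row c 0 = 1 := rfl

lemma row_succ (c j : ℕ) : row c (j + 1) = Equiv.swap c (c + 1) * row (c + 2) j := by
  unfold row
  rw [List.range_succ_eq_map, List.map_cons, List.prod_cons, List.map_map]
  have h1 : ((fun t => Equiv.swap (c + 2 * t) (c + 2 * t + 1)) ∘ Nat.succ)
      = (fun t => Equiv.swap (c + 2 + 2 * t) (c + 2 + 2 * t + 1)) := by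
    funext t
    show Equiv.swap (c + 2 * (t + 1)) (c + 2 * (t + 1) + 1) = _
    congr 1 <;> omega
  rw [h1]
  norm_num

lemma row_fix (c j x : ℕ) (h : x < c ∨ c + 2 * j ≤ x) : row c j x = x := by
  induction j generalizing c with
  | zero => simp [row_zero]
  | succ j ih =>
    rw [row_succ, Equiv.Perm.mul_apply, ih (c + 2) (by omega),
      Equiv.swap_apply_of_ne_of_ne (by omega) (by omega)]

lemma row_even (c j t x : ℕ) (ht : t < j) (hx : x = c + 2 * t) : row c j x = x + 1 := by
  induction j generalizing c t x with
  | zero => omega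
  | succ j ih =>
    rw [row_succ, Equiv.Perm.mul_apply]
    rcases Nat.eq_zero_or_pos t with h0 | h0
    · subst h0
      rw [row_fix (c+2) j x (by omega), hx]
      simp [Equiv.swap_apply_left]
    · rw [ih (c + 2) (t - 1) x (by omega) (by omega),
        Equiv.swap_apply_of_ne_of_ne (by omega) (by omega)]

lemma row_odd (c j t x : ℕ) (ht : t < j) (hx : x = c + 2 * t + 1) : row c j x = x - 1 := by
  induction j generalizing c t x with
  | zero => omega
  | succ j ih =>
    rw [row_succ, Equiv.Perm.mul_apply]
    rcases Nat.eq_zero_or_pos t with h0 | h0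
    · subst h0
      rw [row_fix (c+2) j x (by omega), hx]
      have : c + 2 * 0 + 1 = c + 1 := by omega
      rw [this, Equiv.swap_apply_right]
      omega
    · rw [ih (c + 2) (t - 1) x (by omega) (by omega),
        Equiv.swap_apply_of_ne_of_ne (by omega) (by omega)]

lemma row_row (c j x : ℕ) : row c j (row c j x) = x := by
  rcases lt_or_ge x c with h | h
  · rw [row_fix c j x (Or.inl h), row_fix c j x (Or.inl h)]
  rcases le_or_gt (c + 2 * j) x with h2 | h2
  · rw [row_fix c j x (Or.inr h2), row_fix c j x (Or.inr h2)]
  obtain ⟨t, ht | ht⟩ := Nat.even_or_odd' (x - c)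
  · rw [row_even c j t x (by omega) (by omega), row_odd c j t (x+1) (by omega) (by omega)]
    omega
  · rw [row_odd c j t x (by omega) (by omega), row_even c j t (x-1) (by omega) (by omega)]
    omega

lemma row_mul_row (c j : ℕ) : row c j * row c j = 1 := by
  ext x
  simp [Equiv.Perm.mul_apply, row_row]

def ab (a m k : ℕ) : Equiv.Perm ℕ :=
  ((List.range k).map fun l => row (a + m - l) (l + 1)).prod

lemma ab_zero (a m : ℕ) : ab a m 0 = 1 := rfl

lemma ab_succ (a m k : ℕ) : ab a m (k + 1) = ab a m k * row (a + m - k) (k + 1) := by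
  unfold ab
  rw [List.range_succ, List.map_append, List.prod_append, List.map_singleton,
    List.prod_singleton]

lemma ab_spec (a m k : ℕ) (hk : k ≤ m) :
    (∀ t, t < k → ab a m k (a + m + 1 - k + 2 * t) = a + m + 1 + t) ∧
    (∀ t, t < k → ab a m k (a + m + 2 - k + 2 * t) = a + m + 1 - k + t) ∧
    (∀ x, x + k ≤ a + m ∨ a + m + k + 1 ≤ x → ab a m k x = x) := by
  induction k with
  | zero => exact ⟨fun t ht => by omega, fun t ht => by omega, fun x hx => by simp [ab_zero]⟩
  | succ k ih =>
    obtain ⟨ih1, ih2, ih3⟩ := ih (by omega)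
    refine ⟨fun t ht => ?_, fun t ht => ?_, fun x hx => ?_⟩
    · rw [ab_succ, Equiv.Perm.mul_apply,
        row_even (a + m - k) (k + 1) t _ (by omega) (by omega)]
      rcases Nat.lt_or_ge t k with h | h
      · have := ih1 t h
        rw [show a + m + 1 - (k+1) + 2*t + 1 = a + m + 1 - k + 2*t from by omega]
        rw [this]
      · have hx2 : a + m + 1 - (k + 1) + 2 * t + 1 = a + m + k + 1 := by omega
        rw [hx2, ih3 _ (by omega)]
        omega
    · rw [ab_succ, Equiv.Perm.mul_apply,
        row_odd (a + m - k) (k + 1) t _ (by omega) (by omega)]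
      rcases Nat.eq_zero_or_pos t with h | h
      · subst h
        rw [show a + m + 2 - (k+1) + 2*0 - 1 = a + m - k from by omega,
          ih3 _ (by omega)]
        omega
      · rw [show a + m + 2 - (k+1) + 2*t - 1 = a + m + 2 - k + 2*(t-1) from by omega,
          ih2 (t-1) (by omega)]
        omega
    · rw [ab_succ, Equiv.Perm.mul_apply, row_fix _ _ _ (by omega), ih3 x (by omega)]

lemma conj_point (a m : ℕ) (hm : 1 ≤ m) (y : ℕ) :
    ab a m (m-1) (row (a+1) m y) =
      (if a + 1 ≤ ab a m (m-1) y ∧ ab a m (m-1) y ≤ a + m then ab a m (m-1) y + m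
       else if a + m + 1 ≤ ab a m (m-1) y ∧ ab a m (m-1) y ≤ a + 2*m
         then ab a m (m-1) y - m
       else ab a m (m-1) y) := by
  obtain ⟨spec1, spec2, spec3⟩ := ab_spec a m (m-1) (by omega)
  have hA1 : ∀ t, t < m → ab a m (m-1) (a + 2 + 2 * t) = a + m + 1 + t := by
    intro t ht
    rcases Nat.lt_or_ge t (m-1) with h | h
    · have := spec1 t h; rw [show a+m+1-(m-1)+2*t = a+2+2*t from by omega] at this
      rw [this]
    · have : t = m - 1 := by omega
      subst this
      rw [spec3 _ (by omega)]; omega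
  have hA2 : ∀ t, t < m → ab a m (m-1) (a + 1 + 2 * t) = a + 1 + t := by
    intro t ht
    rcases Nat.eq_zero_or_pos t with h | h
    · subst h; rw [spec3 _ (by omega)]
    · have := spec2 (t-1) (by omega)
      rw [show a+m+2-(m-1)+2*(t-1) = a+1+2*t from by omega] at this
      rw [this]; omega
  rcases Nat.lt_or_ge y (a+1) with hy | hy
  · rw [row_fix _ _ _ (by omega), spec3 y (by omega)]
    rw [if_neg (by omega), if_neg (by omega)]
  rcases Nat.lt_or_ge (a + 2*m) y with hy2 | hy2
  · rw [row_fix _ _ _ (by omega), spec3 y (by omega)]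
    rw [if_neg (by omega), if_neg (by omega)]
  obtain ⟨t, ht | ht⟩ := Nat.even_or_odd' (y - (a+1))
  · have hy3 : y = a + 1 + 2 * t := by omega
    have htm : t < m := by omega
    rw [row_even (a+1) m t y htm (by omega), show y + 1 = a + 2 + 2*t from by omega,
      hA1 t htm, hy3, hA2 t htm]
    rw [if_pos (by omega)]
    omega
  · have hy3 : y = a + 2 + 2 * t := by omega
    have htm : t < m := by omega
    rw [row_odd (a+1) m t y htm (by omega), show y - 1 = a + 1 + 2*t from by omega,
      hA2 t htm, hy3, hA1 t htm]
    rw [if_neg (by omega), if_pos (by omega)]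
    omega

lemma paux (a m : ℕ) (hm : 1 ≤ m) (j : ℕ) :
    (ab a m (m-1) * row (a+1) m * (ab a m (m-1))⁻¹) j =
      (if a + 1 ≤ j ∧ j ≤ a + m then j + m
       else if a + m + 1 ≤ j ∧ j ≤ a + 2*m then j - m
       else j) := by
  have h := conj_point a m hm ((ab a m (m-1))⁻¹ j)
  rw [show ∀ (e : Equiv.Perm ℕ) x, e (e⁻¹ x) = x from fun e x => e.apply_symm_apply x] at h
  calc (ab a m (m-1) * row (a+1) m * (ab a m (m-1))⁻¹) j
      = ab a m (m-1) (row (a+1) m ((ab a m (m-1))⁻¹ j)) := by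
        simp [Equiv.Perm.mul_apply]
    _ = _ := h

-- inversion count machinery
def inv (N : ℕ) (π : Equiv.Perm ℕ) : ℕ :=
  ((Finset.range (N+1) ×ˢ Finset.range (N+1)).filter
    fun p => p.1 < p.2 ∧ π p.2 < π p.1).card

lemma inv_one (N : ℕ) : inv N 1 = 0 := by
  unfold inv
  rw [Finset.card_eq_zero, Finset.filter_eq_empty_iff]
  intro p _
  simp only [Equiv.Perm.one_apply]
  omega

lemma inv_swap_mul (N c : ℕ) (π : Equiv.Perm ℕ) :
    inv N (Equiv.swap c (c+1) * π) ≤ inv N π + 1 := by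
  have key : ∀ u v : ℕ, u < v → Equiv.swap c (c+1) v < Equiv.swap c (c+1) u →
      u = c ∧ v = c + 1 := by
    intro u v h1 h2
    rw [Equiv.swap_apply_def, Equiv.swap_apply_def] at h2
    split_ifs at h2 <;> omega
  have hsub : ((Finset.range (N+1) ×ˢ Finset.range (N+1)).filter
      fun p => p.1 < p.2 ∧ (Equiv.swap c (c+1) * π) p.2 < (Equiv.swap c (c+1) * π) p.1)
      ⊆ insert (π⁻¹ c, π⁻¹ (c+1))
        ((Finset.range (N+1) ×ˢ Finset.range (N+1)).filter
          fun p => p.1 < p.2 ∧ π p.2 < π p.1) := by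
    intro p hp
    rw [Finset.mem_filter] at hp
    obtain ⟨hmem, hlt, hinv⟩ := hp
    rw [Finset.mem_insert]
    by_cases hc : π p.2 < π p.1
    · exact Or.inr (Finset.mem_filter.mpr ⟨hmem, hlt, hc⟩)
    · left
      have hne : π p.1 ≠ π p.2 := fun h => by
        have := π.injective h; omega
      have h12 : π p.1 < π p.2 := by omega
      rw [Equiv.Perm.mul_apply, Equiv.Perm.mul_apply] at hinv
      obtain ⟨e1, e2⟩ := key (π p.1) (π p.2) h12 hinv
      have hq1 : p.1 = π⁻¹ c := by rw [← e1, show ∀ (e : Equiv.Perm ℕ) x, e⁻¹ (e x) = x from fun e x => e.symm_apply_apply x]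
      have hq2 : p.2 = π⁻¹ (c+1) := by rw [← e2, show ∀ (e : Equiv.Perm ℕ) x, e⁻¹ (e x) = x from fun e x => e.symm_apply_apply x]
      cases p
      simp_all
  calc inv N (Equiv.swap c (c+1) * π)
      ≤ (insert (π⁻¹ c, π⁻¹ (c+1)) ((Finset.range (N+1) ×ˢ Finset.range (N+1)).filter
          fun p => p.1 < p.2 ∧ π p.2 < π p.1)).card := Finset.card_le_card hsub
    _ ≤ inv N π + 1 := Finset.card_insert_le _ _

lemma inv_le_length (N : ℕ) (L : List ℕ) :
    inv N ((L.map fun c => Equiv.swap c (c+1)).prod) ≤ L.length := by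
  induction L with
  | nil => simp [inv_one]
  | cons c L ih =>
    rw [List.map_cons, List.prod_cons]
    calc inv N (Equiv.swap c (c+1) * (L.map fun c => Equiv.swap c (c+1)).prod)
        ≤ inv N ((L.map fun c => Equiv.swap c (c+1)).prod) + 1 := inv_swap_mul N c _
      _ ≤ L.length + 1 := by omega
      _ = (c :: L).length := by simp

lemma inv_target (N a m : ℕ) (hm : 1 ≤ m) (hN : a + 2*m ≤ N) (π : Equiv.Perm ℕ)
    (hπ : ∀ j, π j = if a+1 ≤ j ∧ j ≤ a+m then j + m
      else if a+m+1 ≤ j ∧ j ≤ a+2*m then j - m else j) :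
    inv N π = m * m := by
  unfold inv
  have hset : ((Finset.range (N+1) ×ˢ Finset.range (N+1)).filter
      fun p => p.1 < p.2 ∧ π p.2 < π p.1)
      = Finset.Icc (a+1) (a+m) ×ˢ Finset.Icc (a+m+1) (a+2*m) := by
    ext ⟨x, y⟩
    simp only [Finset.mem_filter, Finset.mem_product, Finset.mem_range, Finset.mem_Icc, hπ]
    constructor
    · rintro ⟨⟨hx, hy⟩, hlt, hinv⟩
      split_ifs at hinv <;> omega
    · rintro ⟨⟨h1, h2⟩, h3, h4⟩
      refine ⟨⟨by omega, by omega⟩, by omega, ?_⟩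
      split_ifs <;> omega
  rw [hset, Finset.card_product, Nat.card_Icc, Nat.card_Icc]
  have : a + m + 1 - (a + 1) = m := by omega
  rw [this]
  have : a + 2*m + 1 - (a + m + 1) = m := by omega
  rw [this]

lemma rev_prod {G : Type*} [Group G] (g : ℕ → G) (L : List ℕ)
    (h : ∀ l ∈ L, g l * g l = 1) :
    ((L.reverse).map g).prod = ((L.map g).prod)⁻¹ := by
  induction L with
  | nil => simp
  | cons x L ih =>
    rw [List.reverse_cons, List.map_append, List.prod_append, List.map_singleton,
      List.prod_singleton, List.map_cons, List.prod_cons, mul_inv_rev,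
      ih (fun l hl => h l (List.mem_cons_of_mem _ hl))]
    congr 1
    exact (inv_eq_of_mul_eq_one_right (h x (List.mem_cons_self (a := x) (l := L)))).symm

end Stmt8


open Stmt8


/- Statement 8: the block-exchanging permutation `τ_i ∈ 𝔖_N` equals the product
`κ_0 κ_1 ⋯ κ_{m-2} κ_{m-1} κ_{m-2} ⋯ κ_1 κ_0`, this word is reduced, and the Coxeter
length of `τ_i` is `m²`.  (Letters are `1`-indexed; `s c` is the transposition
`(c, c+1)`.) -/

theorem statement_8 (n m r i : ℕ) (hm : 1 ≤ m) (hr : 2 ≤ r) (hi1 : 1 ≤ i) (hi2 : i + 1 ≤ r)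
    (N : ℕ) (hN : N = n + m * r)
    (b : ℕ) (hb : b = n + i * m)
    -- the simple transpositions
    (s : ℕ → Equiv.Perm ℕ) (hs : ∀ c, s c = Equiv.swap c (c + 1))
    -- the word for `κ_l = s_{b-l}·s_{b-l+2}·⋯·s_{b+l-2}·s_{b+l}`
    (kappa : ℕ → List ℕ)
    (hkappa : ∀ l, kappa l = (List.range (l + 1)).map fun t => b - l + 2 * t)
    -- the concatenated word for `κ_0 κ_1 ⋯ κ_{m-2} κ_{m-1} κ_{m-2} ⋯ κ_1 κ_0`
    (W : List ℕ)
    (hW : W = ((List.range m).map kappa).flatten ++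
      ((List.range (m - 1)).reverse.map kappa).flatten)
    -- the permutation `τ_i` described on letters: add `m` on the first block
    -- `{n+(i-1)m+1, …, n+im}`, subtract `m` on the second block
    -- `{n+im+1, …, n+(i+1)m}`, fix all other letters
    (target : ℕ → ℕ)
    (htarget : ∀ j, target j =
      if n + (i - 1) * m + 1 ≤ j ∧ j ≤ n + i * m then j + m
      else if n + i * m + 1 ≤ j ∧ j ≤ n + (i + 1) * m then j - m
      else j) :
    -- `τ_i = κ_0 κ_1 ⋯ κ_{m-2} κ_{m-1} κ_{m-2} ⋯ κ_1 κ_0`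
    (∀ j : ℕ, (W.map s).prod j = target j) ∧
    -- the concatenated word is an expression of length `m²` in the simple
    -- transpositions `s_1, …, s_{N-1}` …
    W.length = m ^ 2 ∧ (∀ c ∈ W, 1 ≤ c ∧ c + 1 ≤ N) ∧
    -- … and it is reduced: no shorter such expression exists
    (∀ L : List ℕ, (∀ c ∈ L, 1 ≤ c ∧ c + 1 ≤ N) →
      (L.map s).prod = (W.map s).prod → m ^ 2 ≤ L.length) := by
  obtain ⟨i', rfl⟩ : ∃ i', i = i' + 1 := ⟨i - 1, by omega⟩
  have hsf : s = fun c => Equiv.swap c (c + 1) := funext hs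
  subst hsf
  set a := n + i' * m with ha
  -- basic arithmetic facts
  have hba : b = a + m := by rw [hb, ha]; ring
  have hNa : a + 2 * m ≤ N := by
    have h1 : a + 2 * m = n + (i' + 2) * m := by rw [ha]; ring
    have h2 : (i' + 2) * m ≤ r * m := Nat.mul_le_mul_right m (by omega)
    have h3 : r * m = m * r := mul_comm r m
    omega
  have hma : m ≤ b := by
    have h1 : m ≤ (i' + 1) * m := Nat.le_mul_of_pos_left m (by omega)
    have h2 : b = n + (i' + 1) * m := hb
    omega
  -- each kappa word multiplies to a `row`
  have hword : ∀ l, ((kappa l).map fun c => Equiv.swap c (c + 1)).prod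
      = row (a + m - l) (l + 1) := by
    intro l
    rw [hkappa, List.map_map]
    unfold row
    have hfn : ((fun c => Equiv.swap c (c + 1)) ∘ fun t => b - l + 2 * t)
        = fun t => Equiv.swap (a + m - l + 2 * t) (a + m - l + 2 * t + 1) := by
      funext t
      simp only [Function.comp_apply]
      rw [hba]
    rw [hfn]
  have hwfun : (fun l => ((kappa l).map fun c => Equiv.swap c (c + 1)).prod)
      = fun l => row (a + m - l) (l + 1) := funext hword
  -- product of the word W
  have hP : (W.map fun c => Equiv.swap c (c + 1)).prod
      = ab a m (m-1) * row (a+1) m * (ab a m (m-1))⁻¹ := by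
    rw [hW, List.map_append, List.prod_append, List.map_flatten, List.map_flatten,
      List.prod_flatten, List.prod_flatten]
    simp only [List.map_map, Function.comp_def]
    rw [hwfun]
    have hfst : ((List.range m).map fun l => row (a + m - l) (l + 1)).prod
        = ab a m (m-1) * row (a+1) m := by
      rw [show ((List.range m).map fun l => row (a + m - l) (l + 1)).prod = ab a m m from rfl]
      obtain ⟨m', hm'⟩ : ∃ m', m = m' + 1 := ⟨m - 1, by omega⟩
      rw [show ab a m m = ab a m (m' + 1) from by rw [← hm'], ab_succ,
        show a + m - m' = a + 1 from by omega, show m' + 1 = m from by omega,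
        show m' = m - 1 from by omega]
    have hsnd : (((List.range (m-1)).reverse).map fun l => row (a + m - l) (l + 1)).prod
        = (ab a m (m-1))⁻¹ := by
      rw [rev_prod _ _ (fun l _ => row_mul_row (a + m - l) (l + 1))]
      rfl
    rw [hfst, hsnd]
  -- rewriting the target into `a`-form
  have e1 : n + (i' + 1 - 1) * m + 1 = a + 1 := by
    rw [show i' + 1 - 1 = i' from by omega, ha]
  have e2 : n + (i' + 1) * m = a + m := by rw [ha]; ring
  have e3 : n + (i' + 1 + 1) * m = a + 2 * m := by rw [ha]; ring
  have htgt : ∀ j, target j =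
      if a + 1 ≤ j ∧ j ≤ a + m then j + m
      else if a + m + 1 ≤ j ∧ j ≤ a + 2*m then j - m
      else j := by
    intro j
    rw [htarget j, e1, e2, e3]
  -- Part 1
  have part1 : ∀ j : ℕ, (W.map fun c => Equiv.swap c (c + 1)).prod j = target j := by
    intro j
    rw [hP, paux a m hm j, htgt j]
  refine ⟨part1, ?_, ?_, ?_⟩
  -- Part 2: length
  · have len1 : ∀ q, 2 * (((List.range q).map kappa).flatten).length = q * (q + 1) := by
      intro q
      induction q with
      | zero => simp
      | succ q ih =>
        rw [List.range_succ, List.map_append, List.flatten_append, List.length_append]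
        have hkl : (((List.map kappa [q]).flatten)).length = q + 1 := by
          simp [hkappa]
        rw [hkl]
        have hq : (q + 1) * (q + 1 + 1) = q * (q + 1) + 2 * (q + 1) := by ring
        omega
    have len2 : (((List.range (m-1)).reverse.map kappa).flatten).length
        = (((List.range (m-1)).map kappa).flatten).length := by
      rw [List.length_flatten, List.length_flatten, List.map_reverse, List.map_reverse,
        List.sum_reverse]
    have h1 := len1 m
    have h2 := len1 (m - 1)
    rw [hW, List.length_append, len2]
    have hq : m * (m + 1) + (m - 1) * (m - 1 + 1) = 2 * m ^ 2 := by
      obtain ⟨m', rfl⟩ : ∃ m', m = m' + 1 := ⟨m - 1, by omega⟩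
      simp only [Nat.add_sub_cancel]
      ring
    omega
  -- Part 3: letters are in range
  · intro c hc
    rw [hW] at hc
    rw [List.mem_append] at hc
    have hget : ∃ l, l < m ∧ c ∈ kappa l := by
      rcases hc with hc | hc
      · rw [List.mem_flatten] at hc
        obtain ⟨w, hw, hcw⟩ := hc
        rw [List.mem_map] at hw
        obtain ⟨l, hl, rfl⟩ := hw
        rw [List.mem_range] at hl
        exact ⟨l, hl, hcw⟩
      · rw [List.mem_flatten] at hc
        obtain ⟨w, hw, hcw⟩ := hc
        rw [List.mem_map] at hw
        obtain ⟨l, hl, rfl⟩ := hw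
        rw [List.mem_reverse, List.mem_range] at hl
        exact ⟨l, by omega, hcw⟩
    obtain ⟨l, hl, hcl⟩ := hget
    rw [hkappa, List.mem_map] at hcl
    obtain ⟨t, htr, rfl⟩ := hcl
    rw [List.mem_range] at htr
    constructor
    · omega
    · have : b = a + m := hba
      omega
  -- Part 4: reducedness
  · intro L hL heq
    have h1 : inv N ((L.map fun c => Equiv.swap c (c + 1)).prod) ≤ L.length :=
      inv_le_length N L
    have h2 : inv N ((W.map fun c => Equiv.swap c (c + 1)).prod) = m * m := by
      apply inv_target N a m hm hNa
      intro j
      rw [part1 j, htgt j]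
    rw [heq, h2] at h1
    calc m ^ 2 = m * m := by ring
      _ ≤ L.length := h1
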